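/- Suppose Φ ⊆ {I, O, U} and let I be an interpretation with quotient I/∼ by the largest L_Φ-auto-bisimulation. Then: (1) for every terminological axiom C ⊑ D and every concept assertion C(a) in L_Φ, I satisfies it iff I/∼ satisfies it; (2) for every role inclusion axiom (ε ⊑ r or R₁∘…∘R_k ⊑ r with basic roles R_i) and every assertion of the form R(a,b) or a = b, if I satisfies it then I/∼ satisfies it. -/

import Mathlib

/-- A set of DL-features (subset of {I, O, Q, U, Self}). -/
structure DLFeat where
  hasI : Bool
  hasO : Bool
  hasQ : Bool
  hasU : Bool
  hasSelf : Bool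

/-- An interpretation with concept names `CN`, role names `RN`, individual names `IN`
and domain `D`. -/
structure Interp (CN RN IN : Type) (D : Type) where
  cInt : CN → Set D
  rInt : RN → D → D → Prop
  iInt : IN → D

/-- Interpretation of a basic role: a role name, possibly inverted. -/
def brInt {CN RN IN D : Type} (I : Interp CN RN IN D) (R : RN × Bool) (x y : D) : Prop :=
  if R.2 then I.rInt R.1 y x else I.rInt R.1 x y

mutual
/-- Concepts of the full language (membership in `L_Φ` is a separate predicate). -/
inductive DLConcept (CN RN IN : Type) : Type where
  | atom (A : CN)
  | top
  | bot
  | neg (C : DLConcept CN RN IN)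
  | conj (C D : DLConcept CN RN IN)
  | disj (C D : DLConcept CN RN IN)
  | all (R : DLRole CN RN IN) (C : DLConcept CN RN IN)
  | ex (R : DLRole CN RN IN) (C : DLConcept CN RN IN)
  | nom (a : IN)
  | atLeast (n : ℕ) (r : RN) (inverted : Bool) (C : DLConcept CN RN IN)
  | atMost (n : ℕ) (r : RN) (inverted : Bool) (C : DLConcept CN RN IN)
  | exSelf (r : RN)
/-- Roles of the full language. -/
inductive DLRole (CN RN IN : Type) : Type where
  | name (r : RN)
  | eps
  | comp (R S : DLRole CN RN IN)
  | runion (R S : DLRole CN RN IN)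
  | star (R : DLRole CN RN IN)
  | test (C : DLConcept CN RN IN)
  | inv (r : RN)
  | univ
end

mutual
/-- The concept belongs to the language `L_Φ`. -/
def DLConcept.inL {CN RN IN : Type} (Φ : DLFeat) : DLConcept CN RN IN → Prop
  | .atom _ => True
  | .top => True
  | .bot => True
  | .neg C => C.inL Φ
  | .conj C D => C.inL Φ ∧ D.inL Φ
  | .disj C D => C.inL Φ ∧ D.inL Φ
  | .all R C => R.inL Φ ∧ C.inL Φ
  | .ex R C => R.inL Φ ∧ C.inL Φ
  | .nom _ => Φ.hasO = true
  | .atLeast _ _ b C => Φ.hasQ = true ∧ (b = true → Φ.hasI = true) ∧ C.inL Φ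
  | .atMost _ _ b C => Φ.hasQ = true ∧ (b = true → Φ.hasI = true) ∧ C.inL Φ
  | .exSelf _ => Φ.hasSelf = true
/-- The role belongs to the language `L_Φ`. -/
def DLRole.inL {CN RN IN : Type} (Φ : DLFeat) : DLRole CN RN IN → Prop
  | .name _ => True
  | .eps => True
  | .comp R S => R.inL Φ ∧ S.inL Φ
  | .runion R S => R.inL Φ ∧ S.inL Φ
  | .star R => R.inL Φ
  | .test C => C.inL Φ
  | .inv _ => Φ.hasI = true
  | .univ => Φ.hasU = true
end

mutual
/-- Semantics of concepts. -/
def DLConcept.sem {CN RN IN D : Type} (I : Interp CN RN IN D) : DLConcept CN RN IN → Set D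
  | .atom A => I.cInt A
  | .top => Set.univ
  | .bot => ∅
  | .neg C => (DLConcept.sem I C)ᶜ
  | .conj C C' => DLConcept.sem I C ∩ DLConcept.sem I C'
  | .disj C C' => DLConcept.sem I C ∪ DLConcept.sem I C'
  | .all R C => {x | ∀ y, DLRole.sem I R x y → y ∈ DLConcept.sem I C}
  | .ex R C => {x | ∃ y, DLRole.sem I R x y ∧ y ∈ DLConcept.sem I C}
  | .nom a => {I.iInt a}
  | .atLeast n r b C =>
      {x | (n : Cardinal) ≤ Cardinal.mk {y // brInt I (r, b) x y ∧ y ∈ DLConcept.sem I C}}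
  | .atMost n r b C =>
      {x | Cardinal.mk {y // brInt I (r, b) x y ∧ y ∈ DLConcept.sem I C} ≤ (n : Cardinal)}
  | .exSelf r => {x | I.rInt r x x}
/-- Semantics of roles. -/
def DLRole.sem {CN RN IN D : Type} (I : Interp CN RN IN D) : DLRole CN RN IN → D → D → Prop
  | .name r => I.rInt r
  | .eps => Eq
  | .comp R S => Relation.Comp (DLRole.sem I R) (DLRole.sem I S)
  | .runion R S => fun x y => DLRole.sem I R x y ∨ DLRole.sem I S x y
  | .star R => Relation.ReflTransGen (DLRole.sem I R)
  | .test C => fun x y => x = y ∧ x ∈ DLConcept.sem I C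
  | .inv r => fun x y => I.rInt r y x
  | .univ => fun _ _ => True
end

/-- `Z` is an `L_Φ`-bisimulation between `I` and `I'`. -/
def Bisim {CN RN IN D D' : Type} (Φ : DLFeat) (I : Interp CN RN IN D)
    (I' : Interp CN RN IN D') (Z : D → D' → Prop) : Prop :=
  (∀ a : IN, Z (I.iInt a) (I'.iInt a)) ∧
  (∀ (A : CN) x x', Z x x' → (x ∈ I.cInt A ↔ x' ∈ I'.cInt A)) ∧
  (∀ (r : RN) x x' y, Z x x' → I.rInt r x y → ∃ y', Z y y' ∧ I'.rInt r x' y') ∧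
  (∀ (r : RN) x x' y', Z x x' → I'.rInt r x' y' → ∃ y, Z y y' ∧ I.rInt r x y) ∧
  (Φ.hasI = true →
    (∀ (r : RN) x x' y, Z x x' → I.rInt r y x → ∃ y', Z y y' ∧ I'.rInt r y' x') ∧
    (∀ (r : RN) x x' y', Z x x' → I'.rInt r y' x' → ∃ y, Z y y' ∧ I.rInt r y x)) ∧
  (Φ.hasO = true → ∀ (a : IN) x x', Z x x' → (x = I.iInt a ↔ x' = I'.iInt a)) ∧
  (Φ.hasQ = true → ∀ (r : RN) x x', Z x x' →
    ∃ h : {y // I.rInt r x y} ≃ {y' // I'.rInt r x' y'}, ∀ y, Z y.1 (h y).1) ∧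
  (Φ.hasQ = true → Φ.hasI = true → ∀ (r : RN) x x', Z x x' →
    ∃ h : {y // I.rInt r y x} ≃ {y' // I'.rInt r y' x'}, ∀ y, Z y.1 (h y).1) ∧
  (Φ.hasU = true → (∀ x, ∃ x', Z x x') ∧ (∀ x', ∃ x, Z x x')) ∧
  (Φ.hasSelf = true → ∀ (r : RN) x x', Z x x' → (I.rInt r x x ↔ I'.rInt r x' x'))

/-- One step along a basic role (role name, or inverse of a role name if `I ∈ Φ`). -/
def basicStep {CN RN IN D : Type} (Φ : DLFeat) (I : Interp CN RN IN D) (x y : D) : Prop :=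
  ∃ r : RN, I.rInt r x y ∨ (Φ.hasI = true ∧ I.rInt r y x)

/-- `I` is unreachable-objects-free: every element is reachable from some named
individual via a finite path of basic-role edges. -/
def UOF {CN RN IN D : Type} (Φ : DLFeat) (I : Interp CN RN IN D) : Prop :=
  ∀ x : D, ∃ a : IN, Relation.ReflTransGen (basicStep Φ I) (I.iInt a) x

/-- `I` validates the GCI `C ⊑ C'`. -/
def satGCI {CN RN IN D : Type} (I : Interp CN RN IN D) (C C' : DLConcept CN RN IN) : Prop :=
  DLConcept.sem I C ⊆ DLConcept.sem I C'

/-- `I` is a model of the TBox `T`. -/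
def modelsTBox {CN RN IN D : Type} (I : Interp CN RN IN D)
    (T : Set (DLConcept CN RN IN × DLConcept CN RN IN)) : Prop :=
  ∀ p ∈ T, satGCI I p.1 p.2

/-- Individual assertions. -/
inductive Assertion (CN RN IN : Type) : Type where
  | conc (C : DLConcept CN RN IN) (a : IN)
  | rolePos (R : DLRole CN RN IN) (a b : IN)
  | roleNeg (R : DLRole CN RN IN) (a b : IN)
  | eq (a b : IN)
  | neq (a b : IN)

/-- The assertion belongs to `L_Φ`. -/
def Assertion.inL {CN RN IN : Type} (Φ : DLFeat) : Assertion CN RN IN → Prop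
  | .conc C _ => C.inL Φ
  | .rolePos R _ _ => R.inL Φ
  | .roleNeg R _ _ => R.inL Φ
  | .eq _ _ => True
  | .neq _ _ => True

/-- `I` satisfies the individual assertion. -/
def Assertion.sat {CN RN IN D : Type} (I : Interp CN RN IN D) : Assertion CN RN IN → Prop
  | .conc C a => I.iInt a ∈ DLConcept.sem I C
  | .rolePos R a b => DLRole.sem I R (I.iInt a) (I.iInt b)
  | .roleNeg R a b => ¬ DLRole.sem I R (I.iInt a) (I.iInt b)
  | .eq a b => I.iInt a = I.iInt b
  | .neq a b => I.iInt a ≠ I.iInt b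

/-- `I` is a model of the ABox `A`. -/
def modelsABox {CN RN IN D : Type} (I : Interp CN RN IN D) (A : Set (Assertion CN RN IN)) : Prop :=
  ∀ φ ∈ A, φ.sat I

/-- A role axiom `R₁ ∘ … ∘ R_k ⊑ r` (`ε ⊑ r` when the list is empty), the `R_i` basic roles. -/
structure RoleAx (RN : Type) where
  lhs : List (RN × Bool)
  rhs : RN

/-- The role axiom is in `L_Φ` (inverse basic roles only if `I ∈ Φ`). -/
def RoleAx.inL {RN : Type} (Φ : DLFeat) (ax : RoleAx RN) : Prop :=
  ∀ p ∈ ax.lhs, p.2 = true → Φ.hasI = true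

/-- Interpretation of a composition chain of basic roles (`ε` for the empty chain). -/
def chainInt {CN RN IN D : Type} (I : Interp CN RN IN D) : List (RN × Bool) → D → D → Prop
  | [] => Eq
  | R :: l => fun x z => ∃ y, brInt I R x y ∧ chainInt I l y z

/-- `I` validates the role axiom. -/
def satRoleAx {CN RN IN D : Type} (I : Interp CN RN IN D) (ax : RoleAx RN) : Prop :=
  ∀ x y, chainInt I ax.lhs x y → I.rInt ax.rhs x y

/-- `I` is a model of the RBox `R`. -/
def modelsRBox {CN RN IN D : Type} (I : Interp CN RN IN D) (R : Set (RoleAx RN)) : Prop :=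
  ∀ ax ∈ R, satRoleAx I ax

/-- `I'` is an r-extension of `I`. -/
def RExt {CN RN IN D : Type} (I I' : Interp CN RN IN D) : Prop :=
  I'.cInt = I.cInt ∧ I'.iInt = I.iInt ∧ ∀ (r : RN) x y, I.rInt r x y → I'.rInt r x y

/-- `I'` is the least r-extension of `I` validating the RBox `R`. -/
def LeastRExt {CN RN IN D : Type} (I : Interp CN RN IN D) (R : Set (RoleAx RN))
    (I' : Interp CN RN IN D) : Prop :=
  RExt I I' ∧ modelsRBox I' R ∧
    ∀ I'' : Interp CN RN IN D, RExt I I'' → modelsRBox I'' R →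
      ∀ (r : RN) x y, I'.rInt r x y → I''.rInt r x y

/-- `I` is finitely branching w.r.t. `L_Φ`. -/
def FinBranch {CN RN IN D : Type} (Φ : DLFeat) (I : Interp CN RN IN D) : Prop :=
  ∀ (r : RN) (x : D), {y | I.rInt r x y}.Finite ∧ (Φ.hasI = true → {y | I.rInt r y x}.Finite)

/-- `x` and `x'` are `L_Φ`-equivalent: they satisfy the same concepts of `L_Φ`. -/
def LEquiv {CN RN IN D D' : Type} (Φ : DLFeat) (I : Interp CN RN IN D)
    (I' : Interp CN RN IN D') (x : D) (x' : D') : Prop :=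
  ∀ C : DLConcept CN RN IN, C.inL Φ → (x ∈ DLConcept.sem I C ↔ x' ∈ DLConcept.sem I' C)

/-- The largest `L_Φ`-auto-bisimulation of `I` (union of all auto-bisimulations). -/
def gbisim {CN RN IN D : Type} (Φ : DLFeat) (I : Interp CN RN IN D) (x y : D) : Prop :=
  ∃ Z, Bisim Φ I I Z ∧ Z x y

/-- The quotient interpretation of `I` w.r.t. the largest `L_Φ`-auto-bisimulation. -/
def quotInterp {CN RN IN D : Type} (Φ : DLFeat) (I : Interp CN RN IN D) :
    Interp CN RN IN (Quot (gbisim Φ I)) where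
  cInt A := {q | ∃ x, Quot.mk _ x = q ∧ x ∈ I.cInt A}
  rInt r q q' := ∃ x y, Quot.mk _ x = q ∧ Quot.mk _ y = q' ∧ I.rInt r x y
  iInt a := Quot.mk _ (I.iInt a)

/-- A QS-interpretation: an interpretation together with multiplicity functions for
basic roles and self-loop sets for role names. -/
structure QSInterp (CN RN IN D : Type) where
  toInterp : Interp CN RN IN D
  QU : (RN × Bool) → D → D → ℕ
  SE : RN → Set D

/-- The defining positivity condition of QS-interpretations:
`QU R x y > 0` iff `R` connects `x` to `y`. -/
def QSInterp.Proper {CN RN IN D : Type} (J : QSInterp CN RN IN D) : Prop :=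
  ∀ (R : RN × Bool) x y, 0 < J.QU R x y ↔ brInt J.toInterp R x y

/-- `Σ {f y : y ∈ S}` as an extended natural number. -/
noncomputable def qsum {D : Type} (f : D → ℕ) (S : Set D) : ℕ∞ :=
  ⨆ (s : Finset D) (_ : ↑s ⊆ S), (∑ y ∈ s, f y : ℕ∞)

mutual
/-- Semantics of concepts in a QS-interpretation. -/
noncomputable def DLConcept.qsem {CN RN IN D : Type} (J : QSInterp CN RN IN D) :
    DLConcept CN RN IN → Set D
  | .atom A => J.toInterp.cInt A
  | .top => Set.univ
  | .bot => ∅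
  | .neg C => (DLConcept.qsem J C)ᶜ
  | .conj C C' => DLConcept.qsem J C ∩ DLConcept.qsem J C'
  | .disj C C' => DLConcept.qsem J C ∪ DLConcept.qsem J C'
  | .all R C => {x | ∀ y, DLRole.qsem J R x y → y ∈ DLConcept.qsem J C}
  | .ex R C => {x | ∃ y, DLRole.qsem J R x y ∧ y ∈ DLConcept.qsem J C}
  | .nom a => {J.toInterp.iInt a}
  | .atLeast n r b C => {x | (n : ℕ∞) ≤ qsum (J.QU (r, b) x) (DLConcept.qsem J C)}
  | .atMost n r b C => {x | qsum (J.QU (r, b) x) (DLConcept.qsem J C) ≤ (n : ℕ∞)}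
  | .exSelf r => J.SE r
/-- Semantics of roles in a QS-interpretation. -/
noncomputable def DLRole.qsem {CN RN IN D : Type} (J : QSInterp CN RN IN D) :
    DLRole CN RN IN → D → D → Prop
  | .name r => J.toInterp.rInt r
  | .eps => Eq
  | .comp R S => Relation.Comp (DLRole.qsem J R) (DLRole.qsem J S)
  | .runion R S => fun x y => DLRole.qsem J R x y ∨ DLRole.qsem J S x y
  | .star R => Relation.ReflTransGen (DLRole.qsem J R)
  | .test C => fun x y => x = y ∧ x ∈ DLConcept.qsem J C
  | .inv r => fun x y => J.toInterp.rInt r y x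
  | .univ => fun _ _ => True
end

/-- The quotient QS-interpretation of a traditional interpretation `I` w.r.t. the
largest `L_Φ`-auto-bisimulation. -/
noncomputable def qsQuot {CN RN IN D : Type} (Φ : DLFeat) (I : Interp CN RN IN D) :
    QSInterp CN RN IN (Quot (gbisim Φ I)) where
  toInterp := quotInterp Φ I
  QU R q q' := sSup {n | ∃ x, Quot.mk _ x = q ∧
    n = Set.ncard {y | Quot.mk (gbisim Φ I) y = q' ∧ brInt I R x y}}
  SE r := {q | ∃ x, Quot.mk _ x = q ∧ I.rInt r x x}

section Aux
variable {CN RN IN D : Type}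

/-- Equality is always an auto-bisimulation. -/
theorem bisim_eq (Φ : DLFeat) (I : Interp CN RN IN D) : Bisim Φ I I Eq := by
  refine ⟨fun a => rfl, ?_, ?_, ?_, ?_, ?_, ?_, ?_, ?_, ?_⟩
  · rintro A x x' rfl; rfl
  · rintro r x x' y rfl hr; exact ⟨y, rfl, hr⟩
  · rintro r x x' y' rfl hr; exact ⟨y', rfl, hr⟩
  · exact fun _ => ⟨by rintro r x x' y rfl hr; exact ⟨y, rfl, hr⟩,
      by rintro r x x' y' rfl hr; exact ⟨y', rfl, hr⟩⟩
  · rintro _ a x x' rfl; rfl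
  · rintro _ r x x' rfl; exact ⟨Equiv.refl _, fun y => rfl⟩
  · rintro _ _ r x x' rfl; exact ⟨Equiv.refl _, fun y => rfl⟩
  · exact fun _ => ⟨fun x => ⟨x, rfl⟩, fun x => ⟨x, rfl⟩⟩
  · rintro _ r x x' rfl; rfl

variable {Φ : DLFeat} {I : Interp CN RN IN D}

/-- The converse of an auto-bisimulation is an auto-bisimulation (when `Q, Self ∉ Φ`). -/
theorem bisim_symm (hQ : Φ.hasQ = false) (hS : Φ.hasSelf = false) {Z : D → D → Prop}
    (hZ : Bisim Φ I I Z) : Bisim Φ I I (fun x y => Z y x) := by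
  obtain ⟨c1, c2, c3, c4, c5, c6, c7, c8, c9, c10⟩ := hZ
  refine ⟨c1, fun A x x' h => (c2 A x' x h).symm,
    fun r x x' y h hr => c4 r x' x y h hr,
    fun r x x' y' h hr => c3 r x' x y' h hr,
    fun hI => ⟨fun r x x' y h hr => (c5 hI).2 r x' x y h hr,
      fun r x x' y' h hr => (c5 hI).1 r x' x y' h hr⟩,
    fun hO a x x' h => (c6 hO a x' x h).symm,
    fun h => absurd h (by simp [hQ]), fun h => absurd h (by simp [hQ]),
    fun hU => ⟨(c9 hU).2, (c9 hU).1⟩,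
    fun h => absurd h (by simp [hS])⟩

/-- Composition of auto-bisimulations (when `Q, Self ∉ Φ`). -/
theorem bisim_comp (hQ : Φ.hasQ = false) (hS : Φ.hasSelf = false) {Z1 Z2 : D → D → Prop}
    (h1 : Bisim Φ I I Z1) (h2 : Bisim Φ I I Z2) :
    Bisim Φ I I (fun x z => ∃ y, Z1 x y ∧ Z2 y z) := by
  obtain ⟨a1, a2, a3, a4, a5, a6, a7, a8, a9, a10⟩ := h1
  obtain ⟨b1, b2, b3, b4, b5, b6, b7, b8, b9, b10⟩ := h2
  refine ⟨fun a => ⟨I.iInt a, a1 a, b1 a⟩,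
    fun A x x' ⟨m, hm1, hm2⟩ => (a2 A x m hm1).trans (b2 A m x' hm2),
    ?_, ?_, ?_, fun hO a x x' ⟨m, hm1, hm2⟩ => (a6 hO a x m hm1).trans (b6 hO a m x' hm2),
    fun h => absurd h (by simp [hQ]), fun h => absurd h (by simp [hQ]), ?_,
    fun h => absurd h (by simp [hS])⟩
  · rintro r x x' y ⟨m, hm1, hm2⟩ hr
    obtain ⟨u, hu, hru⟩ := a3 r x m y hm1 hr
    obtain ⟨v, hv, hrv⟩ := b3 r m x' u hm2 hru
    exact ⟨v, ⟨u, hu, hv⟩, hrv⟩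
  · rintro r x x' y' ⟨m, hm1, hm2⟩ hr
    obtain ⟨u, hu, hru⟩ := b4 r m x' y' hm2 hr
    obtain ⟨v, hv, hrv⟩ := a4 r x m u hm1 hru
    exact ⟨v, ⟨u, hv, hu⟩, hrv⟩
  · intro hI
    constructor
    · rintro r x x' y ⟨m, hm1, hm2⟩ hr
      obtain ⟨u, hu, hru⟩ := (a5 hI).1 r x m y hm1 hr
      obtain ⟨v, hv, hrv⟩ := (b5 hI).1 r m x' u hm2 hru
      exact ⟨v, ⟨u, hu, hv⟩, hrv⟩
    · rintro r x x' y' ⟨m, hm1, hm2⟩ hr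
      obtain ⟨u, hu, hru⟩ := (b5 hI).2 r m x' y' hm2 hr
      obtain ⟨v, hv, hrv⟩ := (a5 hI).2 r x m u hm1 hru
      exact ⟨v, ⟨u, hv, hu⟩, hrv⟩
  · intro hU
    exact ⟨fun x => by
        obtain ⟨m, hm⟩ := (a9 hU).1 x
        obtain ⟨x', hx'⟩ := (b9 hU).1 m
        exact ⟨x', m, hm, hx'⟩,
      fun x' => by
        obtain ⟨m, hm⟩ := (b9 hU).2 x'
        obtain ⟨x, hx⟩ := (a9 hU).2 m
        exact ⟨x, m, hx, hm⟩⟩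

/-- The largest auto-bisimulation is an equivalence relation. -/
theorem gbisim_equiv (hQ : Φ.hasQ = false) (hS : Φ.hasSelf = false) :
    Equivalence (gbisim Φ I) := by
  refine ⟨fun x => ⟨Eq, bisim_eq Φ I, rfl⟩, ?_, ?_⟩
  · rintro x y ⟨Z, hZ, h⟩; exact ⟨_, bisim_symm hQ hS hZ, h⟩
  · rintro x y z ⟨Z1, h1, hz1⟩ ⟨Z2, h2, hz2⟩
    exact ⟨_, bisim_comp hQ hS h1 h2, y, hz1, hz2⟩

theorem quot_mk_eq (hQ : Φ.hasQ = false) (hS : Φ.hasSelf = false) {x y : D} :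
    Quot.mk (gbisim Φ I) x = Quot.mk (gbisim Φ I) y ↔ gbisim Φ I x y :=
  Quot.eq.trans ((gbisim_equiv hQ hS).eqvGen_iff)

end Aux

section Inv
variable {CN RN IN D D' : Type}

mutual
/-- Invariance of `L_Φ` concepts under `L_Φ`-bisimulations. -/
theorem conceptInv {Φ : DLFeat} (hQ : Φ.hasQ = false) (hS : Φ.hasSelf = false)
    {I : Interp CN RN IN D} {I' : Interp CN RN IN D'} {Z : D → D' → Prop}
    (hZ : Bisim Φ I I' Z) :
    ∀ (C : DLConcept CN RN IN), C.inL Φ → ∀ x x', Z x x' →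
      (x ∈ DLConcept.sem I C ↔ x' ∈ DLConcept.sem I' C)
  | .atom A, _, x, x', h => hZ.2.1 A x x' h
  | .top, _, x, x', _ => by simp [DLConcept.sem]
  | .bot, _, x, x', _ => by simp [DLConcept.sem]
  | .neg C, hC, x, x', h => by
      simp only [DLConcept.inL] at hC
      simpa only [DLConcept.sem, Set.mem_compl_iff] using
        not_congr (conceptInv hQ hS hZ C hC x x' h)
  | .conj C C', hC, x, x', h => by
      simp only [DLConcept.inL] at hC
      simpa only [DLConcept.sem, Set.mem_inter_iff] using
        and_congr (conceptInv hQ hS hZ C hC.1 x x' h) (conceptInv hQ hS hZ C' hC.2 x x' h)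
  | .disj C C', hC, x, x', h => by
      simp only [DLConcept.inL] at hC
      simpa only [DLConcept.sem, Set.mem_union] using
        or_congr (conceptInv hQ hS hZ C hC.1 x x' h) (conceptInv hQ hS hZ C' hC.2 x x' h)
  | .all R C, hC, x, x', h => by
      simp only [DLConcept.inL] at hC
      simp only [DLConcept.sem, Set.mem_setOf_eq]
      constructor
      · intro hx y' hr
        obtain ⟨y, hy, hry⟩ := roleBack hQ hS hZ R hC.1 x x' y' h hr
        exact (conceptInv hQ hS hZ C hC.2 y y' hy).mp (hx y hry)
      · intro hx y hr
        obtain ⟨y', hy, hry⟩ := roleForth hQ hS hZ R hC.1 x x' y h hr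
        exact (conceptInv hQ hS hZ C hC.2 y y' hy).mpr (hx y' hry)
  | .ex R C, hC, x, x', h => by
      simp only [DLConcept.inL] at hC
      simp only [DLConcept.sem, Set.mem_setOf_eq]
      constructor
      · rintro ⟨y, hry, hy⟩
        obtain ⟨y', hyy, hry'⟩ := roleForth hQ hS hZ R hC.1 x x' y h hry
        exact ⟨y', hry', (conceptInv hQ hS hZ C hC.2 y y' hyy).mp hy⟩
      · rintro ⟨y', hry, hy⟩
        obtain ⟨y, hyy, hry'⟩ := roleBack hQ hS hZ R hC.1 x x' y' h hry
        exact ⟨y, hry', (conceptInv hQ hS hZ C hC.2 y y' hyy).mpr hy⟩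
  | .nom a, hC, x, x', h => by
      simp only [DLConcept.inL] at hC
      simpa only [DLConcept.sem, Set.mem_singleton_iff] using hZ.2.2.2.2.2.1 hC a x x' h
  | .atLeast n r b C, hC, x, x', h => by
      simp only [DLConcept.inL] at hC
      exact absurd hC.1 (by simp [hQ])
  | .atMost n r b C, hC, x, x', h => by
      simp only [DLConcept.inL] at hC
      exact absurd hC.1 (by simp [hQ])
  | .exSelf r, hC, x, x', h => by
      simp only [DLConcept.inL] at hC
      exact absurd hC (by simp [hS])

/-- Forth property for `L_Φ` roles. -/
theorem roleForth {Φ : DLFeat} (hQ : Φ.hasQ = false) (hS : Φ.hasSelf = false)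
    {I : Interp CN RN IN D} {I' : Interp CN RN IN D'} {Z : D → D' → Prop}
    (hZ : Bisim Φ I I' Z) :
    ∀ (R : DLRole CN RN IN), R.inL Φ → ∀ x x' y, Z x x' →
      DLRole.sem I R x y → ∃ y', Z y y' ∧ DLRole.sem I' R x' y'
  | .name r, _, x, x', y, h, hr => hZ.2.2.1 r x x' y h hr
  | .eps, _, x, x', y, h, hr => by cases hr; exact ⟨x', h, rfl⟩
  | .comp R S, hR, x, x', y, h, hr => by
      simp only [DLRole.inL] at hR
      obtain ⟨m, hm1, hm2⟩ := hr
      obtain ⟨m', hm, hm1'⟩ := roleForth hQ hS hZ R hR.1 x x' m h hm1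
      obtain ⟨y', hy, hm2'⟩ := roleForth hQ hS hZ S hR.2 m m' y hm hm2
      exact ⟨y', hy, m', hm1', hm2'⟩
  | .runion R S, hR, x, x', y, h, hr => by
      simp only [DLRole.inL] at hR
      rcases hr with hr | hr
      · obtain ⟨y', hy, hr'⟩ := roleForth hQ hS hZ R hR.1 x x' y h hr
        exact ⟨y', hy, Or.inl hr'⟩
      · obtain ⟨y', hy, hr'⟩ := roleForth hQ hS hZ S hR.2 x x' y h hr
        exact ⟨y', hy, Or.inr hr'⟩
  | .star R, hR, x, x', y, h, hr => by
      simp only [DLRole.inL] at hR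
      simp only [DLRole.sem] at hr ⊢
      induction hr with
      | refl => exact ⟨x', h, Relation.ReflTransGen.refl⟩
      | tail _ hbc ih =>
          obtain ⟨b', hb', hrtg⟩ := ih
          obtain ⟨c', hc', hstep⟩ := roleForth hQ hS hZ R hR _ b' _ hb' hbc
          exact ⟨c', hc', hrtg.tail hstep⟩
  | .test C, hC, x, x', y, h, hr => by
      simp only [DLRole.inL] at hC
      obtain ⟨rfl, hx⟩ := hr
      exact ⟨x', h, rfl, (conceptInv hQ hS hZ C hC x x' h).mp hx⟩
  | .inv r, hR, x, x', y, h, hr => by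
      simp only [DLRole.inL] at hR
      exact (hZ.2.2.2.2.1 hR).1 r x x' y h hr
  | .univ, hR, x, x', y, h, _ => by
      simp only [DLRole.inL] at hR
      obtain ⟨y', hy⟩ := (hZ.2.2.2.2.2.2.2.2.1 hR).1 y
      exact ⟨y', hy, trivial⟩

/-- Back property for `L_Φ` roles. -/
theorem roleBack {Φ : DLFeat} (hQ : Φ.hasQ = false) (hS : Φ.hasSelf = false)
    {I : Interp CN RN IN D} {I' : Interp CN RN IN D'} {Z : D → D' → Prop}
    (hZ : Bisim Φ I I' Z) :
    ∀ (R : DLRole CN RN IN), R.inL Φ → ∀ x x' y', Z x x' →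
      DLRole.sem I' R x' y' → ∃ y, Z y y' ∧ DLRole.sem I R x y
  | .name r, _, x, x', y', h, hr => hZ.2.2.2.1 r x x' y' h hr
  | .eps, _, x, x', y', h, hr => by cases hr; exact ⟨x, h, rfl⟩
  | .comp R S, hR, x, x', y', h, hr => by
      simp only [DLRole.inL] at hR
      obtain ⟨m', hm1, hm2⟩ := hr
      obtain ⟨m, hm, hm1'⟩ := roleBack hQ hS hZ R hR.1 x x' m' h hm1
      obtain ⟨y, hy, hm2'⟩ := roleBack hQ hS hZ S hR.2 m m' y' hm hm2
      exact ⟨y, hy, m, hm1', hm2'⟩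
  | .runion R S, hR, x, x', y', h, hr => by
      simp only [DLRole.inL] at hR
      rcases hr with hr | hr
      · obtain ⟨y, hy, hr'⟩ := roleBack hQ hS hZ R hR.1 x x' y' h hr
        exact ⟨y, hy, Or.inl hr'⟩
      · obtain ⟨y, hy, hr'⟩ := roleBack hQ hS hZ S hR.2 x x' y' h hr
        exact ⟨y, hy, Or.inr hr'⟩
  | .star R, hR, x, x', y', h, hr => by
      simp only [DLRole.inL] at hR
      simp only [DLRole.sem] at hr ⊢
      induction hr with
      | refl => exact ⟨x, h, Relation.ReflTransGen.refl⟩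
      | tail _ hbc ih =>
          obtain ⟨b, hb, hrtg⟩ := ih
          obtain ⟨c, hc, hstep⟩ := roleBack hQ hS hZ R hR b _ _ hb hbc
          exact ⟨c, hc, hrtg.tail hstep⟩
  | .test C, hC, x, x', y', h, hr => by
      simp only [DLRole.inL] at hC
      obtain ⟨rfl, hx⟩ := hr
      exact ⟨x, h, rfl, (conceptInv hQ hS hZ C hC x x' h).mpr hx⟩
  | .inv r, hR, x, x', y', h, hr => by
      simp only [DLRole.inL] at hR
      exact (hZ.2.2.2.2.1 hR).2 r x x' y' h hr
  | .univ, hR, x, x', y', h, _ => by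
      simp only [DLRole.inL] at hR
      obtain ⟨y, hy⟩ := (hZ.2.2.2.2.2.2.2.2.1 hR).2 y'
      exact ⟨y, hy, trivial⟩
end

end Inv

section Canon
variable {CN RN IN D : Type} {Φ : DLFeat} {I : Interp CN RN IN D}

/-- The canonical projection is an `L_Φ`-bisimulation onto the quotient. -/
theorem canonBisim (hQ : Φ.hasQ = false) (hS : Φ.hasSelf = false) :
    Bisim Φ I (quotInterp Φ I) (fun x q => Quot.mk (gbisim Φ I) x = q) := by
  refine ⟨fun a => rfl, ?_, ?_, ?_, ?_, ?_,
    fun h => absurd h (by simp [hQ]), fun h _ => absurd h (by simp [hQ]), ?_,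
    fun h => absurd h (by simp [hS])⟩
  · rintro A x q rfl
    constructor
    · intro hx; exact ⟨x, rfl, hx⟩
    · rintro ⟨x0, hq, hx0⟩
      obtain ⟨Z, hZ, hz⟩ := (quot_mk_eq hQ hS).mp hq
      exact (hZ.2.1 A x0 x hz).mp hx0
  · rintro r x q y rfl hr
    exact ⟨Quot.mk _ y, rfl, x, y, rfl, rfl, hr⟩
  · rintro r x q q' rfl ⟨x0, y0, hx0, hy0, hr⟩
    obtain ⟨Z, hZ, hz⟩ := (quot_mk_eq hQ hS).mp hx0
    obtain ⟨y1, hy1, hr1⟩ := hZ.2.2.1 r x0 x y0 hz hr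
    refine ⟨y1, ?_, hr1⟩
    rw [← hy0]
    exact ((quot_mk_eq hQ hS).mpr ⟨Z, hZ, hy1⟩).symm
  · intro hI
    constructor
    · rintro r x q y rfl hr
      exact ⟨Quot.mk _ y, rfl, y, x, rfl, rfl, hr⟩
    · rintro r x q q' rfl ⟨x0, y0, hx0, hy0, hr⟩
      obtain ⟨Z, hZ, hz⟩ := (quot_mk_eq hQ hS).mp hy0
      obtain ⟨y1, hy1, hr1⟩ := (hZ.2.2.2.2.1 hI).1 r y0 x x0 hz hr
      refine ⟨y1, ?_, hr1⟩
      rw [← hx0]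
      exact ((quot_mk_eq hQ hS).mpr ⟨Z, hZ, hy1⟩).symm
  · rintro hO a x q rfl
    constructor
    · rintro rfl; rfl
    · intro hq
      obtain ⟨Z, hZ, hz⟩ := (quot_mk_eq hQ hS).mp hq
      exact (hZ.2.2.2.2.2.1 hO a x (I.iInt a) hz).mpr rfl
  · intro _
    refine ⟨fun x => ⟨Quot.mk _ x, rfl⟩, fun q => ?_⟩
    obtain ⟨x, rfl⟩ := Quot.exists_rep q
    exact ⟨x, rfl⟩

/-- Lifting composition chains from the quotient to `I`. -/
theorem chain_lift (hQ : Φ.hasQ = false) (hS : Φ.hasSelf = false) :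
    ∀ (l : List (RN × Bool)), (∀ p ∈ l, p.2 = true → Φ.hasI = true) →
    ∀ (q q' : Quot (gbisim Φ I)) (x : D), Quot.mk (gbisim Φ I) x = q →
    chainInt (quotInterp Φ I) l q q' →
    ∃ y, Quot.mk (gbisim Φ I) y = q' ∧ chainInt I l x y := by
  intro l
  induction l with
  | nil =>
      rintro _ q q' x rfl hch
      exact ⟨x, hch, rfl⟩
  | cons R l ih =>
      rintro hl q q' x rfl ⟨qm, hbr, hch⟩
      obtain ⟨r, b⟩ := R
      cases b with
      | false =>
          simp only [brInt, if_neg] at hbr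
          obtain ⟨x0, y0, hx0, hy0, hr⟩ := hbr
          obtain ⟨Z, hZ, hz⟩ := (quot_mk_eq hQ hS).mp hx0
          obtain ⟨y1, hy1, hr1⟩ := hZ.2.2.1 r x0 x y0 hz hr
          have hy1q : Quot.mk (gbisim Φ I) y1 = qm := by
            rw [← hy0]; exact ((quot_mk_eq hQ hS).mpr ⟨Z, hZ, hy1⟩).symm
          obtain ⟨y, hyq, hcy⟩ := ih (fun p hp => hl p (List.mem_cons_of_mem _ hp)) qm q' y1 hy1q hch
          exact ⟨y, hyq, y1, by simpa [brInt] using hr1, hcy⟩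
      | true =>
          have hI : Φ.hasI = true := hl (r, true) List.mem_cons_self rfl
          simp only [brInt, if_pos] at hbr
          obtain ⟨x0, y0, hx0, hy0, hr⟩ := hbr
          obtain ⟨Z, hZ, hz⟩ := (quot_mk_eq hQ hS).mp hy0
          obtain ⟨y1, hy1, hr1⟩ := (hZ.2.2.2.2.1 hI).1 r y0 x x0 hz hr
          have hy1q : Quot.mk (gbisim Φ I) y1 = qm := by
            rw [← hx0]; exact ((quot_mk_eq hQ hS).mpr ⟨Z, hZ, hy1⟩).symm
          obtain ⟨y, hyq, hcy⟩ := ih (fun p hp => hl p (List.mem_cons_of_mem _ hp)) qm q' y1 hy1q hch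
          exact ⟨y, hyq, y1, by simpa [brInt] using hr1, hcy⟩

end Canon

/-- For `Φ ⊆ {I,O,U}`: (1) terminological axioms and concept assertions
of `L_Φ` are invariant under passing to the quotient by the largest
`L_Φ`-auto-bisimulation; (2) role inclusion axioms and assertions `R(a,b)`, `a = b`
are preserved. -/
theorem quotient_preservation {CN RN IN D : Type} (Φ : DLFeat)
    (hQ : Φ.hasQ = false) (hS : Φ.hasSelf = false) (I : Interp CN RN IN D) :
    (∀ C C' : DLConcept CN RN IN, C.inL Φ → C'.inL Φ →
      (satGCI I C C' ↔ satGCI (quotInterp Φ I) C C')) ∧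
    (∀ (C : DLConcept CN RN IN) (a : IN), C.inL Φ →
      (I.iInt a ∈ DLConcept.sem I C ↔
        (quotInterp Φ I).iInt a ∈ DLConcept.sem (quotInterp Φ I) C)) ∧
    (∀ ax : RoleAx RN, ax.inL Φ → satRoleAx I ax → satRoleAx (quotInterp Φ I) ax) ∧
    (∀ (R : DLRole CN RN IN) (a b : IN), R.inL Φ →
      DLRole.sem I R (I.iInt a) (I.iInt b) →
      DLRole.sem (quotInterp Φ I) R ((quotInterp Φ I).iInt a) ((quotInterp Φ I).iInt b)) ∧
    (∀ a b : IN, I.iInt a = I.iInt b →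
      (quotInterp Φ I).iInt a = (quotInterp Φ I).iInt b) := by
  refine ⟨?_, ?_, ?_, ?_, ?_⟩
  · intro C C' hC hC'
    constructor
    · intro hsat q hq
      obtain ⟨x, rfl⟩ := Quot.exists_rep q
      exact (conceptInv hQ hS (canonBisim hQ hS) C' hC' x _ rfl).mp
        (hsat ((conceptInv hQ hS (canonBisim hQ hS) C hC x _ rfl).mpr hq))
    · intro hsat x hx
      exact (conceptInv hQ hS (canonBisim hQ hS) C' hC' x _ rfl).mpr
        (hsat ((conceptInv hQ hS (canonBisim hQ hS) C hC x _ rfl).mp hx))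
  · intro C a hC
    exact conceptInv hQ hS (canonBisim hQ hS) C hC (I.iInt a) _ rfl
  · intro ax hax hsat q q' hch
    obtain ⟨x, rfl⟩ := Quot.exists_rep q
    obtain ⟨y, rfl, hcy⟩ := chain_lift hQ hS ax.lhs hax _ q' x rfl hch
    exact ⟨x, y, rfl, rfl, hsat x y hcy⟩
  · intro R a b hR hsem
    obtain ⟨q', hq', hsem'⟩ :=
      roleForth hQ hS (canonBisim hQ hS) R hR (I.iInt a) _ (I.iInt b) rfl hsem
    rw [← hq'] at hsem'
    exact hsem'
  · intro a b h
    exact congrArg (Quot.mk (gbisim Φ I)) h
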